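/- Let m be an odd integer with m ≥ 3, let V be a vector space over ℚ, and let ⟨·,·⟩ : V × V → ℚ be a ℚ-bilinear form with symmetrization (x,y) := ⟨x,y⟩ + ⟨y,x⟩. For X : ℤ/mℤ → V set S^X(i) := ∑_{k=0}^{m-1} (−1)^k X(i+k) and E(X) := (1/4)·∑_{i=1}^{m-1} ⟨S^X(i), S^X(i+1)⟩ − (1/4)·⟨S^X(1), S^X(0)⟩ + ∑_{i=0}^{m-1} ⟨X(i), S^X(i) − X(i)⟩, where indices are computed in ℤ/mℤ and the sums ∑_{i=1}^{m-1} and ∑_{i=0}^{m-1} run over the representatives 1,…,m−1 and 0,…,m−1 respectively. Let A, B, I : ℤ/mℤ → V and define M : ℤ/mℤ → V by M(i) = A(i) + B(i) − I(i) − I(i−1). Then: ∑_{i=0}^{m-1} ⟨S^A(i), B(i)⟩ + E(M) = E(A) + E(B) + ∑_{i=0}^{m-1} ( −(1/2)·S^A(i+1), B(i) − B(i+1) ) − ( −(1/2)·S^A(0), −(1/2)·S^B(1) ) + ∑_{i=1}^{m-1} ( −(1/2)·S^A(i+1), −(1/2)·S^B(i) ) + ∑_{i=0}^{m-1} ⟨A(i),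 B(i)⟩ + ∑_{i=0}^{m-1} ⟨M(i) − M(i+1), I(i)⟩ + ∑_{i=1}^{m-1} ⟨I(i−1), I(i)⟩ − ⟨I(0), I(m−1)⟩ − ( I(m−1), −(1/2)·(S^A(1) + S^B(1)) ) + ∑_{i=1}^{m-1} ( I(i), −(1/2)·(S^A(i) + S^B(i)) ). -/

import Mathlib

/-- The alternating cyclic sum `S^X(i) = ∑_{k=0}^{m-1} (-1)^k X(i+k)`,
with indices computed in `ℤ/mℤ`. -/
def altSum {m : ℕ} {V : Type*} [AddCommGroup V] (X : ZMod m → V) (i : ZMod m) : V :=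
  ∑ k ∈ Finset.range m, ((-1 : ℤ) ^ k) • X (i + (k : ZMod m))

/-- The exponent
`E(X) = (1/4) ∑_{i=1}^{m-1} ⟨S^X(i), S^X(i+1)⟩ - (1/4) ⟨S^X(1), S^X(0)⟩
        + ∑_{i=0}^{m-1} ⟨X(i), S^X(i) - X(i)⟩`
appearing in the embedding `φ_m` of Theorem 3.1, with indices computed in `ℤ/mℤ`. -/
def EForm (m : ℕ) {V : Type*} [AddCommGroup V] (b : V → V → ℚ) (X : ZMod m → V) : ℚ :=
  (1 / 4 : ℚ) * ∑ i ∈ Finset.Ico 1 m, b (altSum X (i : ZMod m)) (altSum X ((i : ZMod m) + 1))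
    - (1 / 4 : ℚ) * b (altSum X (1 : ZMod m)) (altSum X (0 : ZMod m))
    + ∑ i ∈ Finset.range m, b (X (i : ZMod m)) (altSum X (i : ZMod m) - X (i : ZMod m))

/-- The symmetrization `(x, y) = ⟨x, y⟩ + ⟨y, x⟩` of a bilinear form. -/
def symForm {V : Type*} (b : V → V → ℚ) (x y : V) : ℚ :=
  b x y + b y x

section aux
variable {m : ℕ} {V : Type*} [AddCommGroup V] [Module ℚ V]

lemma sum_range_cast [NeZero m] (F : ZMod m → ℚ) :
    ∑ i ∈ Finset.range m, F (i : ZMod m) = ∑ j : ZMod m, F j := by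
  refine Finset.sum_nbij' (fun i => (i : ZMod m)) (fun j => j.val) ?_ ?_ ?_ ?_ ?_ <;>
    simp [ZMod.val_lt, ZMod.natCast_val, ZMod.val_cast_of_lt, Finset.mem_range]
  · intro i hi; exact Nat.mod_eq_of_lt hi

lemma sum_shift [NeZero m] (F : ZMod m → ℚ) (c : ZMod m) :
    ∑ j : ZMod m, F (j + c) = ∑ j : ZMod m, F j :=
  Fintype.sum_equiv (Equiv.addRight c) _ _ (fun _ => rfl)

lemma sum_Ico_univ [NeZero m] (F : ZMod m → ℚ) :
    ∑ i ∈ Finset.Ico 1 m, F (i : ZMod m) = (∑ j : ZMod m, F j) - F 0 := by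
  have h1 : ∑ i ∈ Finset.range m, F (i : ZMod m)
      = F 0 + ∑ i ∈ Finset.Ico 1 m, F (i : ZMod m) := by
    have hm : m = (m - 1) + 1 := (Nat.succ_pred_eq_of_pos (Nat.pos_of_ne_zero (NeZero.ne m))).symm
    rw [Finset.sum_Ico_eq_sum_range]
    rw [show Finset.range m = Finset.range ((m-1)+1) from by rw [← hm]]
    rw [Finset.sum_range_succ' (fun i => F (i : ZMod m)) (m-1)]
    simp [add_comm]
  rw [sum_range_cast] at h1
  linarith

lemma altSum_succ (hm : Odd m) (X : ZMod m → V) (i : ZMod m) :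
    altSum X (i + 1) = (2 : ℚ) • X i - altSum X i := by
  have key : ∀ k : ℕ, ((-1 : ℤ) ^ k) • X (i + 1 + (k : ZMod m))
      = -(((-1 : ℤ) ^ (k+1)) • X (i + ((k+1 : ℕ) : ZMod m))) := by
    intro k
    have : i + 1 + (k : ZMod m) = i + ((k+1 : ℕ) : ZMod m) := by push_cast; ring
    rw [this, pow_succ]
    simp [mul_smul]
  have h1 : altSum X (i + 1)
      = -∑ k ∈ Finset.range m, ((-1 : ℤ) ^ (k+1)) • X (i + ((k+1 : ℕ) : ZMod m)) := by
    unfold altSum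
    rw [← Finset.sum_neg_distrib]
    exact Finset.sum_congr rfl fun k _ => (key k)
  set f : ℕ → V := fun k => ((-1 : ℤ) ^ k) • X (i + (k : ZMod m)) with hf
  have h2 : ∑ k ∈ Finset.range m, f (k+1)
      = (∑ k ∈ Finset.range m, f k) + f m - f 0 := by
    have ha := Finset.sum_range_succ' f m
    have hb := Finset.sum_range_succ f m
    rw [hb] at ha
    rw [eq_sub_iff_add_eq, ← ha]
  have hfm : f m = - X i := by
    simp only [hf]
    rw [ZMod.natCast_self, add_zero, hm.neg_one_pow]
    simp
  have hf0 : f 0 = X i := by simp [hf]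
  have hsum : (∑ k ∈ Finset.range m, f k) = altSum X i := rfl
  rw [h1, h2, hsum, hfm, hf0, two_smul]
  abel

end aux

section aux2
variable {m : ℕ} {V : Type*} [AddCommGroup V] [Module ℚ V]

lemma altSum_M (hm : Odd m) (A B I M : ZMod m → V)
    (hM : ∀ i : ZMod m, M i = A i + B i - I i - I (i - 1)) (j : ZMod m) :
    altSum M j = altSum A j + altSum B j - (2 : ℚ) • I (j - 1) := by
  have h4 : altSum M j = altSum A j + altSum B j - altSum I j - altSum I (j - 1) := by
    unfold altSum
    rw [← Finset.sum_add_distrib, ← Finset.sum_sub_distrib, ← Finset.sum_sub_distrib]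
    refine Finset.sum_congr rfl fun k _ => ?_
    rw [hM (j + (k : ZMod m)),
      show j + (k : ZMod m) - 1 = (j - 1) + (k : ZMod m) from by ring,
      smul_sub, smul_sub, smul_add]
  have h5 := altSum_succ hm I (j - 1)
  rw [sub_add_cancel] at h5
  have h6 : altSum I (j - 1) = (2 : ℚ) • I (j - 1) - altSum I j := by rw [h5]; abel
  rw [h4, h6]; abel

section withb
variable [NeZero m] (b : V → V → ℚ)
    (hb_addl : ∀ x y z : V, b (x + y) z = b x z + b y z)
    (hb_addr : ∀ x y z : V, b x (y + z) = b x y + b x z)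
    (hb_smull : ∀ (c : ℚ) (x y : V), b (c • x) y = c * b x y)
    (hb_smulr : ∀ (c : ℚ) (x y : V), b x (c • y) = c * b x y)

include hb_addr hb_smulr in
lemma shift_rel (hm : Odd m) (I X : ZMod m → V) :
    (∑ j : ZMod m, b (I (j - 1)) (altSum X j)) + (∑ j : ZMod m, b (I j) (altSum X j))
      = 2 * ∑ j : ZMod m, b (I j) (X j) := by
  have hb_negr : ∀ x y : V, b x (-y) = - b x y := fun x y => by
    rw [← neg_one_smul ℚ y, hb_smulr]; ring
  have hb_subr : ∀ x y z : V, b x (y - z) = b x y - b x z := fun x y z => by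
    rw [sub_eq_add_neg, hb_addr, hb_negr, sub_eq_add_neg]
  have h1 : ∑ j : ZMod m, b (I (j - 1)) (altSum X j)
      = ∑ j : ZMod m, b (I j) (altSum X (j + 1)) := by
    rw [← sum_shift (fun j => b (I (j - 1)) (altSum X j)) 1]
    exact Finset.sum_congr rfl fun j _ => by rw [add_sub_cancel_right]
  rw [h1, ← Finset.sum_add_distrib, Finset.mul_sum]
  refine Finset.sum_congr rfl fun j _ => ?_
  rw [altSum_succ hm, hb_subr, hb_smulr]
  ring

include hb_addl hb_addr hb_smull hb_smulr in
lemma reflect_rel (hm : Odd m) (A B : ZMod m → V) :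
    (∑ j : ZMod m, b (altSum A j) (B j)) + (∑ j : ZMod m, b (A j) (altSum B j))
      = 2 * ∑ j : ZMod m, b (A j) (B j) := by
  have hb0l : ∀ y : V, b 0 y = 0 := fun y => by
    have h := hb_smull 0 y y; rw [zero_smul] at h; simpa using h
  have hb0r : ∀ x : V, b x 0 = 0 := fun x => by
    have h := hb_smulr 0 x x; rw [zero_smul] at h; simpa using h
  have hb_negr : ∀ x y : V, b x (-y) = - b x y := fun x y => by
    rw [← neg_one_smul ℚ y, hb_smulr]; ring
  have hb_subr : ∀ x y z : V, b x (y - z) = b x y - b x z := fun x y z => by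
    rw [sub_eq_add_neg, hb_addr, hb_negr, sub_eq_add_neg]
  classical
  have hsuml : ∀ (s : Finset ℕ) (f : ℕ → V) (y : V),
      b (∑ k ∈ s, f k) y = ∑ k ∈ s, b (f k) y := by
    intro s f y
    induction s using Finset.induction_on with
    | empty => simp [hb0l]
    | @insert a s hne ih => rw [Finset.sum_insert hne, Finset.sum_insert hne, hb_addl, ih]
  have hsumr : ∀ (s : Finset ℕ) (f : ℕ → V) (x : V),
      b x (∑ k ∈ s, f k) = ∑ k ∈ s, b x (f k) := by
    intro s f x
    induction s using Finset.induction_on with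
    | empty => simp [hb0r]
    | @insert a s hne ih => rw [Finset.sum_insert hne, Finset.sum_insert hne, hb_addr, ih]
  have hzl : ∀ (k : ℕ) (x y : V), b (((-1 : ℤ) ^ k) • x) y = (-1 : ℚ) ^ k * b x y := by
    intro k x y
    rw [← Int.cast_smul_eq_zsmul ℚ, hb_smull]
    push_cast
    ring
  have hzr : ∀ (k : ℕ) (x y : V), b x (((-1 : ℤ) ^ k) • y) = (-1 : ℚ) ^ k * b x y := by
    intro k x y
    rw [← Int.cast_smul_eq_zsmul ℚ, hb_smulr]
    push_cast
    ring
  have hme : Even (m - 1) := Nat.Odd.sub_odd hm odd_one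
  have key : ∑ j : ZMod m, b (altSum A j) (B j)
      = ∑ j : ZMod m, b (A j) (altSum B (j + 1)) := by
    calc ∑ j : ZMod m, b (altSum A j) (B j)
        = ∑ j : ZMod m, ∑ k ∈ Finset.range m,
            (-1 : ℚ) ^ k * b (A (j + (k : ZMod m))) (B j) := by
          refine Finset.sum_congr rfl fun j _ => ?_
          simp only [altSum]
          rw [hsuml]
          exact Finset.sum_congr rfl fun k _ => hzl k _ _
      _ = ∑ k ∈ Finset.range m, ∑ j : ZMod m,
            (-1 : ℚ) ^ k * b (A (j + (k : ZMod m))) (B j) := Finset.sum_comm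
      _ = ∑ k ∈ Finset.range m, (-1 : ℚ) ^ k *
            ∑ j : ZMod m, b (A j) (B (j - (k : ZMod m))) := by
          refine Finset.sum_congr rfl fun k _ => ?_
          rw [← Finset.mul_sum]
          congr 1
          rw [← sum_shift (fun j => b (A j) (B (j - (k : ZMod m)))) (k : ZMod m)]
          exact Finset.sum_congr rfl fun j _ => by rw [add_sub_cancel_right]
      _ = ∑ k ∈ Finset.range m, (-1 : ℚ) ^ (m - 1 - k) *
            ∑ j : ZMod m, b (A j) (B (j + 1 + ((m - 1 - k : ℕ) : ZMod m))) := by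
          refine Finset.sum_congr rfl fun k hk => ?_
          have hk' : k < m := Finset.mem_range.mp hk
          have hp : (-1 : ℚ) ^ (m - 1 - k) = (-1 : ℚ) ^ k := by
            rcases Nat.even_or_odd k with he | ho
            · rw [((Nat.even_sub (by omega : k ≤ m - 1)).mpr
                  (iff_of_true hme he)).neg_one_pow, he.neg_one_pow]
            · rw [(Nat.Even.sub_odd (by omega) hme ho).neg_one_pow, ho.neg_one_pow]
          have hidx : ∀ j : ZMod m, j + 1 + ((m - 1 - k : ℕ) : ZMod m)
              = j - (k : ZMod m) := by
            intro j
            have h2 : ((m - k : ℕ) : ZMod m) = - (k : ZMod m) := by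
              rw [Nat.cast_sub (by omega : k ≤ m), ZMod.natCast_self]; ring
            have h1 : ((m - 1 - k : ℕ) : ZMod m) = ((m - k : ℕ) : ZMod m) - 1 := by
              rw [show m - k = (m - 1 - k) + 1 from by omega]; push_cast; ring
            rw [h1, h2]; ring
          rw [hp]
          congr 1
          exact (Finset.sum_congr rfl fun j _ => by rw [hidx j]).symm
      _ = ∑ k ∈ Finset.range m, (-1 : ℚ) ^ k *
            ∑ j : ZMod m, b (A j) (B (j + 1 + (k : ZMod m))) :=
          Finset.sum_range_reflect
            (fun k => (-1 : ℚ) ^ k * ∑ j : ZMod m, b (A j) (B (j + 1 + (k : ZMod m)))) m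
      _ = ∑ j : ZMod m, ∑ k ∈ Finset.range m,
            (-1 : ℚ) ^ k * b (A j) (B (j + 1 + (k : ZMod m))) := by
          rw [Finset.sum_comm]
          exact Finset.sum_congr rfl fun k _ => Finset.mul_sum _ _ _
      _ = ∑ j : ZMod m, b (A j) (altSum B (j + 1)) := by
          refine Finset.sum_congr rfl fun j _ => ?_
          simp only [altSum]
          rw [hsumr]
          exact (Finset.sum_congr rfl fun k _ => hzr k _ _).symm
  rw [key, ← Finset.sum_add_distrib, Finset.mul_sum]
  refine Finset.sum_congr rfl fun j _ => ?_
  rw [altSum_succ hm, hb_subr, hb_smulr]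
  ring

lemma EForm_eq' (X : ZMod m → V) :
    EForm m b X
      = (1 / 4 : ℚ) * (∑ j : ZMod m, b (altSum X j) (altSum X (j + 1)))
        - (1 / 4 : ℚ) * b (altSum X 0) (altSum X (0 + 1))
        - (1 / 4 : ℚ) * b (altSum X 1) (altSum X 0)
        + ∑ j : ZMod m, b (X j) (altSum X j - X j) := by
  unfold EForm
  rw [sum_Ico_univ (fun j => b (altSum X j) (altSum X (j + 1))),
    sum_range_cast (fun j => b (X j) (altSum X j - X j))]
  ring

end withb
end aux2

set_option maxHeartbeats 1600000 in
/-- The exponent identity at the heart of Theorem 3.1: for odd `m ≥ 3`, a `ℚ`-bilinear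
form `⟨·,·⟩` on a `ℚ`-vector space `V`, functions `A B I : ℤ/mℤ → V` and
`M(i) = A(i) + B(i) - I(i) - I(i-1)`, comparing the exponents of `v` on the two sides of
`φ_m(u_A u_B) = φ_m(u_A) φ_m(u_B)` gives
`∑ ⟨S^A(i), B(i)⟩ + E(M) = E(A) + E(B) + t₀ + t₁ + t₂ + t₃`. -/
theorem exponent_identity {m : ℕ} (hm : Odd m) (hm3 : 3 ≤ m)
    {V : Type*} [AddCommGroup V] [Module ℚ V] (b : V → V → ℚ)
    (hb_addl : ∀ x y z : V, b (x + y) z = b x z + b y z)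
    (hb_addr : ∀ x y z : V, b x (y + z) = b x y + b x z)
    (hb_smull : ∀ (c : ℚ) (x y : V), b (c • x) y = c * b x y)
    (hb_smulr : ∀ (c : ℚ) (x y : V), b x (c • y) = c * b x y)
    (A B I M : ZMod m → V)
    (hM : ∀ i : ZMod m, M i = A i + B i - I i - I (i - 1)) :
    (∑ i ∈ Finset.range m, b (altSum A (i : ZMod m)) (B (i : ZMod m))) + EForm m b M
      = EForm m b A + EForm m b B
        + (∑ i ∈ Finset.range m,
            symForm b ((-(1 / 2) : ℚ) • altSum A ((i : ZMod m) + 1))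
              (B (i : ZMod m) - B ((i : ZMod m) + 1)))
        - symForm b ((-(1 / 2) : ℚ) • altSum A (0 : ZMod m))
            ((-(1 / 2) : ℚ) • altSum B (1 : ZMod m))
        + (∑ i ∈ Finset.Ico 1 m,
            symForm b ((-(1 / 2) : ℚ) • altSum A ((i : ZMod m) + 1))
              ((-(1 / 2) : ℚ) • altSum B (i : ZMod m)))
        + (∑ i ∈ Finset.range m, b (A (i : ZMod m)) (B (i : ZMod m)))
        + (∑ i ∈ Finset.range m,
            b (M (i : ZMod m) - M ((i : ZMod m) + 1)) (I (i : ZMod m)))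
        + (∑ i ∈ Finset.Ico 1 m, b (I ((i : ZMod m) - 1)) (I (i : ZMod m)))
        - b (I (0 : ZMod m)) (I ((m - 1 : ℕ) : ZMod m))
        - symForm b (I ((m - 1 : ℕ) : ZMod m))
            ((-(1 / 2) : ℚ) • (altSum A (1 : ZMod m) + altSum B (1 : ZMod m)))
        + (∑ i ∈ Finset.Ico 1 m,
            symForm b (I (i : ZMod m))
              ((-(1 / 2) : ℚ) • (altSum A (i : ZMod m) + altSum B (i : ZMod m)))) := by
  haveI : NeZero m := ⟨by omega⟩
  have hb_negl : ∀ x y : V, b (-x) y = - b x y := fun x y => by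
    rw [← neg_one_smul ℚ x, hb_smull]; ring
  have hb_negr : ∀ x y : V, b x (-y) = - b x y := fun x y => by
    rw [← neg_one_smul ℚ y, hb_smulr]; ring
  have hb_subl : ∀ x y z : V, b (x - y) z = b x z - b y z := fun x y z => by
    rw [sub_eq_add_neg, hb_addl, hb_negl, sub_eq_add_neg]
  have hb_subr : ∀ x y z : V, b x (y - z) = b x y - b x z := fun x y z => by
    rw [sub_eq_add_neg, hb_addr, hb_negr, sub_eq_add_neg]
  have hcast : ((m - 1 : ℕ) : ZMod m) = (0 : ZMod m) - 1 := by
    rw [Nat.cast_sub (by omega : 1 ≤ m), ZMod.natCast_self]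
    push_cast; ring
  rw [hcast]
  rw [EForm_eq' b M, EForm_eq' b A, EForm_eq' b B]
  -- convert range/Ico sums to sums over ZMod m
  rw [sum_range_cast (fun j => b (altSum A j) (B j))]
  rw [sum_range_cast (fun j =>
    symForm b ((-(1 / 2) : ℚ) • altSum A (j + 1)) (B j - B (j + 1)))]
  rw [sum_Ico_univ (fun j =>
    symForm b ((-(1 / 2) : ℚ) • altSum A (j + 1)) ((-(1 / 2) : ℚ) • altSum B j))]
  rw [sum_range_cast (fun j => b (A j) (B j))]
  rw [sum_range_cast (fun j => b (M j - M (j + 1)) (I j))]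
  rw [sum_Ico_univ (fun j => b (I (j - 1)) (I j))]
  rw [sum_Ico_univ (fun j =>
    symForm b (I j) ((-(1 / 2) : ℚ) • (altSum A j + altSum B j)))]
  -- split the genuinely shifted sums
  have e4 : (∑ j : ZMod m,
        symForm b ((-(1 / 2) : ℚ) • altSum A (j + 1)) (B j - B (j + 1)))
      = (∑ j : ZMod m, symForm b ((-(1 / 2) : ℚ) • altSum A (j + 1)) (B j))
        - ∑ j : ZMod m, symForm b ((-(1 / 2) : ℚ) • altSum A j) (B j) := by
    rw [← sum_shift (fun j => symForm b ((-(1 / 2) : ℚ) • altSum A j) (B j)) 1,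
      ← Finset.sum_sub_distrib]
    refine Finset.sum_congr rfl fun j _ => ?_
    simp only [symForm, hb_subr, hb_subl]
    ring
  have e7 : (∑ j : ZMod m, b (M j - M (j + 1)) (I j))
      = (∑ j : ZMod m, b (M j) (I j)) - ∑ j : ZMod m, b (M j) (I (j - 1)) := by
    rw [← sum_shift (fun j => b (M j) (I (j - 1))) 1, ← Finset.sum_sub_distrib]
    refine Finset.sum_congr rfl fun j _ => ?_
    rw [hb_subl, add_sub_cancel_right]
  rw [e4, e7]
  -- canonical atomization of each cyclic sum
  have eM2 : (∑ j : ZMod m, b (altSum M j) (altSum M (j + 1)))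
      = ∑ j : ZMod m,
        ((-4 : ℚ) * b (I (j - 1)) (A j)
          + (-4 : ℚ) * b (I (j - 1)) (B j)
          + (4 : ℚ) * b (I (j - 1)) (I j)
          + (2 : ℚ) * b (I (j - 1)) (altSum A j)
          + (2 : ℚ) * b (I (j - 1)) (altSum B j)
          + (2 : ℚ) * b (altSum A j) (A j)
          + (2 : ℚ) * b (altSum A j) (B j)
          + (-2 : ℚ) * b (altSum A j) (I j)
          + (-1 : ℚ) * b (altSum A j) (altSum A j)
          + (-1 : ℚ) * b (altSum A j) (altSum B j)
          + (2 : ℚ) * b (altSum B j) (A j)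
          + (2 : ℚ) * b (altSum B j) (B j)
          + (-2 : ℚ) * b (altSum B j) (I j)
          + (-1 : ℚ) * b (altSum B j) (altSum A j)
          + (-1 : ℚ) * b (altSum B j) (altSum B j)) := by
    refine Finset.sum_congr rfl fun j _ => ?_
    rw [altSum_succ hm M j, altSum_M hm A B I M hM j, hM j]
    simp only [hb_addl, hb_addr, hb_subl, hb_subr, hb_smull, hb_smulr]
    ring
  have eM3 : (∑ j : ZMod m, b (M j) (altSum M j - M j))
      = ∑ j : ZMod m,
        ((-1 : ℚ) * b (A j) (A j)
          + (-1 : ℚ) * b (A j) (B j)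
          + (1 : ℚ) * b (A j) (I j)
          + (-1 : ℚ) * b (A j) (I (j - 1))
          + (1 : ℚ) * b (A j) (altSum A j)
          + (1 : ℚ) * b (A j) (altSum B j)
          + (-1 : ℚ) * b (B j) (A j)
          + (-1 : ℚ) * b (B j) (B j)
          + (1 : ℚ) * b (B j) (I j)
          + (-1 : ℚ) * b (B j) (I (j - 1))
          + (1 : ℚ) * b (B j) (altSum A j)
          + (1 : ℚ) * b (B j) (altSum B j)
          + (1 : ℚ) * b (I j) (A j)
          + (1 : ℚ) * b (I j) (B j)
          + (-1 : ℚ) * b (I j) (I j)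
          + (1 : ℚ) * b (I j) (I (j - 1))
          + (-1 : ℚ) * b (I j) (altSum A j)
          + (-1 : ℚ) * b (I j) (altSum B j)
          + (1 : ℚ) * b (I (j - 1)) (A j)
          + (1 : ℚ) * b (I (j - 1)) (B j)
          + (-1 : ℚ) * b (I (j - 1)) (I j)
          + (1 : ℚ) * b (I (j - 1)) (I (j - 1))
          + (-1 : ℚ) * b (I (j - 1)) (altSum A j)
          + (-1 : ℚ) * b (I (j - 1)) (altSum B j)) := by
    refine Finset.sum_congr rfl fun j _ => ?_
    rw [altSum_M hm A B I M hM j, hM j]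
    simp only [hb_addl, hb_addr, hb_subl, hb_subr, hb_smull, hb_smulr]
    ring
  have eA2 : (∑ j : ZMod m, b (altSum A j) (altSum A (j + 1)))
      = ∑ j : ZMod m,
        ((2 : ℚ) * b (altSum A j) (A j)
          + (-1 : ℚ) * b (altSum A j) (altSum A j)) := by
    refine Finset.sum_congr rfl fun j _ => ?_
    rw [altSum_succ hm A j]
    simp only [hb_addl, hb_addr, hb_subl, hb_subr, hb_smull, hb_smulr]
    ring
  have eA3 : (∑ j : ZMod m, b (A j) (altSum A j - A j))
      = ∑ j : ZMod m,
        ((-1 : ℚ) * b (A j) (A j) + (1 : ℚ) * b (A j) (altSum A j)) := by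
    refine Finset.sum_congr rfl fun j _ => ?_
    simp only [hb_subr]
    ring
  have eB2 : (∑ j : ZMod m, b (altSum B j) (altSum B (j + 1)))
      = ∑ j : ZMod m,
        ((2 : ℚ) * b (altSum B j) (B j)
          + (-1 : ℚ) * b (altSum B j) (altSum B j)) := by
    refine Finset.sum_congr rfl fun j _ => ?_
    rw [altSum_succ hm B j]
    simp only [hb_addl, hb_addr, hb_subl, hb_subr, hb_smull, hb_smulr]
    ring
  have eB3 : (∑ j : ZMod m, b (B j) (altSum B j - B j))
      = ∑ j : ZMod m,
        ((-1 : ℚ) * b (B j) (B j) + (1 : ℚ) * b (B j) (altSum B j)) := by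
    refine Finset.sum_congr rfl fun j _ => ?_
    simp only [hb_subr]
    ring
  have e4P : (∑ j : ZMod m, symForm b ((-(1 / 2) : ℚ) • altSum A (j + 1)) (B j))
      = ∑ j : ZMod m,
        ((-1 : ℚ) * b (A j) (B j)
          + (-1 : ℚ) * b (B j) (A j)
          + (1 / 2 : ℚ) * b (B j) (altSum A j)
          + (1 / 2 : ℚ) * b (altSum A j) (B j)) := by
    refine Finset.sum_congr rfl fun j _ => ?_
    rw [altSum_succ hm A j]
    simp only [symForm, hb_addl, hb_addr, hb_subl, hb_subr, hb_smull, hb_smulr]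
    ring
  have e4G : (∑ j : ZMod m, symForm b ((-(1 / 2) : ℚ) • altSum A j) (B j))
      = ∑ j : ZMod m,
        ((-(1 / 2) : ℚ) * b (B j) (altSum A j)
          + (-(1 / 2) : ℚ) * b (altSum A j) (B j)) := by
    refine Finset.sum_congr rfl fun j _ => ?_
    simp only [symForm, hb_smull, hb_smulr]
    ring
  have e5 : (∑ j : ZMod m,
        symForm b ((-(1 / 2) : ℚ) • altSum A (j + 1)) ((-(1 / 2) : ℚ) • altSum B j))
      = ∑ j : ZMod m,
        ((1 / 2 : ℚ) * b (A j) (altSum B j)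
          + (-(1 / 4) : ℚ) * b (altSum A j) (altSum B j)
          + (1 / 2 : ℚ) * b (altSum B j) (A j)
          + (-(1 / 4) : ℚ) * b (altSum B j) (altSum A j)) := by
    refine Finset.sum_congr rfl fun j _ => ?_
    rw [altSum_succ hm A j]
    simp only [symForm, hb_addl, hb_addr, hb_subl, hb_subr, hb_smull, hb_smulr]
    ring
  have e71 : (∑ j : ZMod m, b (M j) (I j))
      = ∑ j : ZMod m,
        ((1 : ℚ) * b (A j) (I j)
          + (1 : ℚ) * b (B j) (I j)
          + (-1 : ℚ) * b (I j) (I j)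
          + (-1 : ℚ) * b (I (j - 1)) (I j)) := by
    refine Finset.sum_congr rfl fun j _ => ?_
    rw [hM j]
    simp only [hb_addl, hb_subl]
    ring
  have e72 : (∑ j : ZMod m, b (M j) (I (j - 1)))
      = ∑ j : ZMod m,
        ((1 : ℚ) * b (A j) (I (j - 1))
          + (1 : ℚ) * b (B j) (I (j - 1))
          + (-1 : ℚ) * b (I j) (I (j - 1))
          + (-1 : ℚ) * b (I (j - 1)) (I (j - 1))) := by
    refine Finset.sum_congr rfl fun j _ => ?_
    rw [hM j]
    simp only [hb_addl, hb_subl]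
    ring
  have e9 : (∑ j : ZMod m,
        symForm b (I j) ((-(1 / 2) : ℚ) • (altSum A j + altSum B j)))
      = ∑ j : ZMod m,
        ((-(1 / 2) : ℚ) * b (I j) (altSum A j)
          + (-(1 / 2) : ℚ) * b (I j) (altSum B j)
          + (-(1 / 2) : ℚ) * b (altSum A j) (I j)
          + (-(1 / 2) : ℚ) * b (altSum B j) (I j)) := by
    refine Finset.sum_congr rfl fun j _ => ?_
    simp only [symForm, hb_addl, hb_addr, hb_smull, hb_smulr]
    ring
  rw [eM2, eM3, eA2, eA3, eB2, eB3, e4P, e4G, e5, e71, e72, e9]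
  -- boundary expansions
  have hsM01 := altSum_succ hm M 0
  have hsA01 := altSum_succ hm A 0
  have hsB01 := altSum_succ hm B 0
  have hsA1 := altSum_succ hm A 0
  rw [zero_add] at hsA1
  have hsB1 := altSum_succ hm B 0
  rw [zero_add] at hsB1
  have hMs0 := altSum_M hm A B I M hM 0
  have hMs1 := altSum_M hm A B I M hM 1
  rw [sub_self] at hMs1
  have hM0 := hM 0
  rw [hsM01, hMs1, hMs0, hM0, hsA01, hsB01, hsA1, hsB1]
  -- expand the boundary bilinear terms
  simp only [symForm, hb_addl, hb_addr, hb_subl, hb_subr, hb_smull, hb_smulr]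
  -- split the cyclic sums into atomic sums
  simp only [Finset.sum_add_distrib]
  simp only [← Finset.mul_sum]
  -- finish with the reflection and shift relations
  have hR2 := reflect_rel b hb_addl hb_addr hb_smull hb_smulr hm A B
  have hR1a := shift_rel b hb_addr hb_smulr hm I A
  have hR1b := shift_rel b hb_addr hb_smulr hm I B
  linear_combination (1 / 2 : ℚ) * hR2 - (1 / 2 : ℚ) * hR1a - (1 / 2 : ℚ) * hR1b
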